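/- For every dimension d ≥ 2, every horizon T ≥ 1, every D > 0 and G > 0, every switching budget S with D ≤ S < D√T, and every deterministic player strategy σ, there exist loss vectors m_1, …, m_T ∈ ℝ^d with ‖m_t‖ = G for all t such that, letting w_t = σ_t(m_1, …, m_{t−1}) be the player's actions, either the continuous switching constraint Σ_{t=2}^T ‖w_t − w_{t−1}‖ ≤ S is violated, or the regret satisfies R = Σ_{t=1}^T ⟨m_t, w_t⟩ − min_{w ∈ 𝒟} ⟨Σ_{t=1}^T m_t, w⟩ ≥ 0.05·D·G·(D·T/S). -/

import Mathlib

open scoped InnerProductSpace BigOperators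

lemma exists_unit_orth (d : ℕ) (hd : 2 ≤ d) (v : EuclideanSpace ℝ (Fin d)) :
    ∃ u : EuclideanSpace ℝ (Fin d), ‖u‖ = 1 ∧ ⟪u, v⟫_ℝ = 0 := by
  set i0 : Fin d := ⟨0, by omega⟩
  set i1 : Fin d := ⟨1, by omega⟩
  have hne : i0 ≠ i1 := by simp [i0, i1, Fin.ext_iff]
  set e0 : EuclideanSpace ℝ (Fin d) := EuclideanSpace.single i0 1
  set e1 : EuclideanSpace ℝ (Fin d) := EuclideanSpace.single i1 1
  set c : EuclideanSpace ℝ (Fin d) := (v i1) • e0 - (v i0) • e1 with hc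
  have hcv : ⟪c, v⟫_ℝ = 0 := by
    simp [hc, inner_sub_left, inner_smul_left, e0, e1,
      EuclideanSpace.inner_single_left]
    ring
  by_cases h : c = 0
  · refine ⟨e0, ?_, ?_⟩
    · simp [e0, EuclideanSpace.norm_single]
    · have hv0 : v i0 = 0 := by
        have := congrArg (fun x : EuclideanSpace ℝ (Fin d) => x i1) h
        simpa [hc, e0, e1, EuclideanSpace.single_apply, hne, hne.symm] using this
      simp [e0, EuclideanSpace.inner_single_left, hv0]
  · refine ⟨‖c‖⁻¹ • c, ?_, ?_⟩
    · simp [norm_smul, norm_inv, inv_mul_cancel₀ (norm_ne_zero_iff.2 h)]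
    · rw [inner_smul_left]; simp [hcv]

lemma exists_unit_nonneg_inner (d : ℕ) (hd : 2 ≤ d) (a b : EuclideanSpace ℝ (Fin d)) :
    ∃ u : EuclideanSpace ℝ (Fin d), ‖u‖ = 1 ∧ 0 ≤ ⟪u, a⟫_ℝ ∧ 0 ≤ ⟪u, b⟫_ℝ := by
  set c : EuclideanSpace ℝ (Fin d) := ‖a‖ • b + ‖b‖ • a with hc
  by_cases h : c = 0
  · by_cases ha : a = 0
    · obtain ⟨u, hu1, hu2⟩ := exists_unit_orth d hd b
      exact ⟨u, hu1, by simp [ha], le_of_eq hu2.symm⟩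
    · obtain ⟨u, hu1, hu2⟩ := exists_unit_orth d hd a
      have hub : ⟪u, b⟫_ℝ = 0 := by
        have h2 : ⟪u, c⟫_ℝ = 0 := by rw [h]; simp
        rw [hc, inner_add_right, real_inner_smul_right, real_inner_smul_right, hu2] at h2
        have hna : ‖a‖ ≠ 0 := norm_ne_zero_iff.2 ha
        have h4 : ‖a‖ * ⟪u, b⟫_ℝ = 0 := by linarith
        rcases mul_eq_zero.mp h4 with h3 | h3
        · exact absurd h3 hna
        · exact h3
      exact ⟨u, hu1, le_of_eq hu2.symm, le_of_eq hub.symm⟩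
  · refine ⟨‖c‖⁻¹ • c, ?_, ?_, ?_⟩
    · simp [norm_smul, norm_inv, inv_mul_cancel₀ (norm_ne_zero_iff.2 h)]
    · rw [inner_smul_left]
      have hca : 0 ≤ ⟪c, a⟫_ℝ := by
        rw [hc, inner_add_left, real_inner_smul_left, real_inner_smul_left, real_inner_self_eq_norm_mul_norm]
        have := abs_real_inner_le_norm b a
        have h1 : -(‖b‖*‖a‖) ≤ ⟪b,a⟫_ℝ := neg_le_of_abs_le this
        nlinarith [norm_nonneg a, norm_nonneg b]
      have : (0:ℝ) ≤ ‖c‖⁻¹ := by positivity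
      simpa using mul_nonneg this hca
    · rw [inner_smul_left]
      have hcb : 0 ≤ ⟪c, b⟫_ℝ := by
        rw [hc, inner_add_left, real_inner_smul_left, real_inner_smul_left, real_inner_self_eq_norm_mul_norm]
        have := abs_real_inner_le_norm a b
        have h1 : -(‖a‖*‖b‖) ≤ ⟪a,b⟫_ℝ := neg_le_of_abs_le this
        nlinarith [norm_nonneg a, norm_nonneg b]
      have : (0:ℝ) ≤ ‖c‖⁻¹ := by positivity
      simpa using mul_nonneg this hcb

lemma key_ineq (D S : ℝ) (T L Nf : ℕ) (hD : 0 < D) (hS : 0 < S) (hSlow : D ≤ S)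
    (hT : 1 ≤ T) (hL0 : 0 < L)
    (hLdef : L = if 100 * S^2 < D^2 * (T:ℝ) then ⌈D^2 * (T:ℝ) / (16 * S^2)⌉₊ else 1)
    (hNfdef : Nf = T / L) :
    D * (D*(T:ℝ)/S) / 20 ≤ D/2 * (Real.sqrt Nf * L) - ((L:ℝ)-1) * S := by
  have hT0 : (0:ℝ) < T := by exact_mod_cast hT
  have hL1r : (1:ℝ) ≤ (L:ℝ) := by exact_mod_cast hL0
  have hmod1 : L * Nf + T % L = T := by rw [hNfdef]; exact Nat.div_add_mod T L
  have hmod2 : T % L < L := Nat.mod_lt T hL0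
  have hD2S2 : D^2 ≤ S^2 := by nlinarith
  have hNfr : (T:ℝ) - L + 1 ≤ (L:ℝ) * Nf := by
    have h3 : ((L * Nf + T % L : ℕ):ℝ) = (T:ℝ) := by exact_mod_cast congrArg (Nat.cast (R := ℝ)) hmod1
    push_cast at h3
    have h5 : T % L ≤ L - 1 := by omega
    have h6 := (Nat.cast_le (α := ℝ)).mpr h5
    rw [Nat.cast_sub hL0, Nat.cast_one] at h6
    linarith
  by_cases hcase : 100 * S^2 < D^2 * (T:ℝ)
  · -- big blocks regime
    rw [if_pos hcase] at hLdef
    have hS2 : (0:ℝ) < S^2 := by positivity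
    have hLlo : D^2*T/(16*S^2) ≤ (L:ℝ) := by rw [hLdef]; exact Nat.le_ceil _
    have hLhi : (L:ℝ) < D^2*T/(16*S^2) + 1 := by
      rw [hLdef]; exact Nat.ceil_lt_add_one (by positivity)
    clear hLdef
    have hDTS : D^2*(T:ℝ) ≤ S^2*(T:ℝ) := mul_le_mul_of_nonneg_right hD2S2 hT0.le
    have hT100 : (100:ℝ) < T := by nlinarith
    obtain ⟨q, hq⟩ : ∃ q : ℝ, q = D^2*T/(16*S^2) := ⟨_, rfl⟩
    rw [← hq] at hLlo hLhi
    have hq0 : 0 < q := by rw [hq]; positivity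
    have hqT16 : q ≤ (T:ℝ)/16 := by
      rw [hq, div_le_div_iff₀ (by positivity) (by norm_num : (0:ℝ) < 16)]
      linarith
    have hLT : (L:ℝ) ≤ (T:ℝ)/16 + 1 := by linarith
    have hqX : q*(16*S^2) = D^2*T := by rw [hq]; field_simp
    obtain ⟨A, hA⟩ : ∃ A : ℝ, A = ((L:ℝ)-1)*S + D*(D*(T:ℝ)/S)/20 := ⟨_, rfl⟩
    have hA0 : 0 ≤ A := by
      have h1 : 0 ≤ ((L:ℝ)-1)*S := mul_nonneg (by linarith) hS.le
      have h2 : 0 ≤ D*(D*(T:ℝ)/S)/20 := by positivity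
      rw [hA]; linarith
    have hDTq : D*(D*(T:ℝ)/S)/20 = 4*q*S/5 := by
      rw [hq]; field_simp; ring
    have hql : (L:ℝ) - 1 ≤ q := by linarith
    have hAle : A ≤ 9/5*q*S := by
      rw [hA, hDTq]
      have := mul_le_mul_of_nonneg_right hql hS.le
      linarith
    suffices hsq : A^2 ≤ (D/2*(L:ℝ))^2 * Nf by
      have h1 : A = Real.sqrt (A^2) := (Real.sqrt_sq hA0).symm
      have h2 : Real.sqrt (A^2) ≤ Real.sqrt ((D/2*(L:ℝ))^2 * Nf) := Real.sqrt_le_sqrt hsq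
      have h3 : Real.sqrt ((D/2*(L:ℝ))^2 * Nf) = (D/2*(L:ℝ)) * Real.sqrt Nf := by
        rw [Real.sqrt_mul (sq_nonneg _), Real.sqrt_sq (by positivity)]
      rw [h3] at h2
      have h4 : A ≤ D/2*(L:ℝ) * Real.sqrt Nf := by linarith
      have h5 : D/2*(L:ℝ) * Real.sqrt Nf = D/2 * (Real.sqrt Nf * L) := by ring
      linarith [hA]
    -- polynomial heart
    have hfac : 0 ≤ ((L:ℝ) - q) * ((T:ℝ) - (L:ℝ) - q) := by
      apply mul_nonneg
      · linarith
      · linarith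
    have hfac2 : ((L:ℝ)-q)*((T:ℝ)-(L:ℝ)-q) = (L:ℝ)*((T:ℝ)-(L:ℝ)) - q*((T:ℝ)-q) := by ring
    have hkey2 : q*((T:ℝ)-q) ≤ (L:ℝ)*((T:ℝ)-(L:ℝ)) := by linarith
    have hL2Nf : q*((T:ℝ)-q) ≤ (L:ℝ)^2*Nf := by
      have h7 := mul_le_mul_of_nonneg_left hNfr (by linarith : (0:ℝ) ≤ (L:ℝ))
      have e1 : (L:ℝ)*((L:ℝ)*Nf) = (L:ℝ)^2*Nf := by ring
      have e2 : (L:ℝ)*((T:ℝ)-(L:ℝ)+1) = (L:ℝ)*(T:ℝ) - (L:ℝ)^2 + (L:ℝ) := by ring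
      have e3 : (L:ℝ)*((T:ℝ)-(L:ℝ)) = (L:ℝ)*(T:ℝ) - (L:ℝ)^2 := by ring
      linarith
    have hTq : 15*(T:ℝ)/16 ≤ (T:ℝ) - q := by linarith
    have h8 : 15/4 * q^2 * S^2 ≤ D^2/4 * (q*((T:ℝ)-q)) := by
      have h9 := mul_le_mul_of_nonneg_left hTq (by positivity : (0:ℝ) ≤ D^2/4*q)
      have h10 : D^2/4*q*(15*(T:ℝ)/16) = 15/64*(D^2*(T:ℝ))*q := by ring
      have h11 : 15/64*(D^2*(T:ℝ))*q = 15/4*q^2*S^2 := by rw [← hqX]; ring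
      have h12 : D^2/4*q*((T:ℝ)-q) = D^2/4*(q*((T:ℝ)-q)) := by ring
      linarith
    have hAsq : A^2 ≤ (9/5*q*S)^2 := pow_le_pow_left₀ hA0 hAle 2
    have hq2S2 : 0 ≤ q^2*S^2 := by positivity
    have h13 : (9/5*q*S)^2 = 81/25*(q^2*S^2) := by ring
    have h14 := mul_le_mul_of_nonneg_left hL2Nf (by positivity : (0:ℝ) ≤ D^2/4)
    have h15 : (D/2*(L:ℝ))^2 * Nf = D^2/4*((L:ℝ)^2*Nf) := by ring
    linarith
  · -- single-round blocks regime
    rw [if_neg hcase] at hLdef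
    have hLr : (L:ℝ) = 1 := by rw [hLdef]; norm_num
    have hNfT : Nf = T := by rw [hNfdef, hLdef, Nat.div_one]
    have hsq : D*T/(10*S) ≤ Real.sqrt T := by
      rw [show (D*(T:ℝ)/(10*S)) = Real.sqrt ((D*(T:ℝ)/(10*S))^2) from (Real.sqrt_sq (by positivity)).symm]
      apply Real.sqrt_le_sqrt
      rw [div_pow, div_le_iff₀ (by positivity)]
      push_neg at hcase
      have h2 := mul_le_mul_of_nonneg_right hcase hT0.le
      have e1 : (D*(T:ℝ))^2 = D^2*(T:ℝ)*(T:ℝ) := by ring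
      have e2 : (T:ℝ)*(10*S)^2 = 100*S^2*(T:ℝ) := by ring
      linarith
    have h1 := mul_le_mul_of_nonneg_left hsq (by positivity : (0:ℝ) ≤ D/2)
    rw [hNfT, hLr, mul_one]
    have heq : D/2 * (D*(T:ℝ)/(10*S)) = D*(D*(T:ℝ)/S)/20 := by field_simp; ring
    linarith [h1, heq]

noncomputable def advAux {E : Type*} [Zero E] (F : (ℕ → E) → ℕ → E) : ℕ → E
  | i => F (fun j => if h : j < i then advAux F j else 0) i
  termination_by i => i
  decreasing_by exact h

lemma advAux_eq {E : Type*} [Zero E] (F : (ℕ → E) → ℕ → E) (i : ℕ) :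
    advAux F i = F (fun j => if h : j < i then advAux F j else 0) i := by
  conv_lhs => rw [advAux]

/-- For `d ≥ 2`, `T ≥ 1`, `D, G > 0`, any switching budget `S` with
`D ≤ S < D√T`, and every deterministic player strategy `σ`, there exist loss vectors of norm `G`
such that either the continuous switching constraint `∑_{t=2}^T ‖w t − w (t−1)‖ ≤ S` is violated,
or the regret is at least `0.05 · D · G · (D·T/S)`. -/
theorem stmt1 (d T : ℕ) (hd : 2 ≤ d) (hT : 1 ≤ T) (D G S : ℝ) (hD : 0 < D) (hG : 0 < G)
    (hSlow : D ≤ S) (hShigh : S < D * Real.sqrt T)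
    (σ : (t : ℕ) → (Fin t → EuclideanSpace ℝ (Fin d)) → EuclideanSpace ℝ (Fin d))
    (hσ : ∀ t ms, σ t ms ∈ Metric.closedBall (0 : EuclideanSpace ℝ (Fin d)) (D / 2)) :
    ∃ m : ℕ → EuclideanSpace ℝ (Fin d),
      (∀ t ∈ Finset.Icc 1 T, ‖m t‖ = G) ∧
      (let w : ℕ → EuclideanSpace ℝ (Fin d) :=
        fun t => σ (t - 1) (fun j => m (j.val + 1));
       ¬ (∑ t ∈ Finset.Icc 2 T, ‖w t - w (t - 1)‖ ≤ S) ∨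
       (∑ t ∈ Finset.Icc 1 T, ⟪m t, w t⟫_ℝ) -
          (⨅ v : Metric.closedBall (0 : EuclideanSpace ℝ (Fin d)) (D / 2),
            ⟪∑ t ∈ Finset.Icc 1 T, m t, (v : EuclideanSpace ℝ (Fin d))⟫_ℝ) ≥
        0.05 * D * G * (D * T / S)) := by
  classical
  have hS : 0 < S := lt_of_lt_of_le hD hSlow
  have hT0 : (0:ℝ) < T := by exact_mod_cast hT
  -- choice function
  choose ch hch1 hch2 hch3 using exists_unit_nonneg_inner d hd
  -- block length
  set L : ℕ := if 100 * S^2 < D^2 * T then ⌈D^2 * T / (16 * S^2)⌉₊ else 1 with hLdef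
  have hL0 : 0 < L := by
    rw [hLdef]
    split
    · exact Nat.ceil_pos.mpr (by positivity)
    · norm_num
  have hL0' : (0:ℝ) < L := by exact_mod_cast hL0
  clear_value L
  -- the adversary
  set F : (ℕ → EuclideanSpace ℝ (Fin d)) → ℕ → EuclideanSpace ℝ (Fin d) :=
    fun prev i => ch (σ (i*L) (fun j => G • prev (j.val / L))) (∑ j ∈ Finset.range i, prev j)
    with hF
  set u : ℕ → EuclideanSpace ℝ (Fin d) := advAux F with hudef
  have hu : ∀ i, u i = ch (σ (i*L) (fun j : Fin (i*L) => G • u (j.val / L)))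
      (∑ j ∈ Finset.range i, u j) := by
    intro i
    have hmask : ∀ j < i, (fun j => if h : j < i then advAux F j else 0) j = u j := by
      intro j hj
      show (if h : j < i then advAux F j else 0) = u j
      rw [dif_pos hj, hudef]
    have step : u i = F (fun j => if h : j < i then advAux F j else 0) i := by
      rw [hudef]; exact advAux_eq F i
    rw [step]
    show ch (σ (i*L) (fun j : Fin (i*L) =>
        G • (fun j => if h : j < i then advAux F j else 0) (j.val / L)))
      (∑ j ∈ Finset.range i, (fun j => if h : j < i then advAux F j else 0) j) = _
    have h1 : (fun j : Fin (i*L) =>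
        G • (fun j => if h : j < i then advAux F j else 0) (j.val / L)) =
        (fun j : Fin (i*L) => G • u (j.val / L)) := by
      funext j
      have hj : j.val / L < i := by
        rw [Nat.div_lt_iff_lt_mul hL0]
        exact j.isLt
      rw [hmask _ hj]
    have h2 : (∑ j ∈ Finset.range i, (fun j => if h : j < i then advAux F j else 0) j) =
        ∑ j ∈ Finset.range i, u j :=
      Finset.sum_congr rfl fun j hj => hmask j (Finset.mem_range.mp hj)
    rw [h1, h2]
  have hunorm : ∀ i, ‖u i‖ = 1 := fun i => by rw [hu i]; exact hch1 _ _
  have hua : ∀ i, 0 ≤ ⟪u i, σ (i*L) (fun j : Fin (i*L) => G • u (j.val/L))⟫_ℝ :=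
    fun i => by rw [hu i]; exact hch2 _ _
  have hub : ∀ i, 0 ≤ ⟪u i, ∑ j ∈ Finset.range i, u j⟫_ℝ :=
    fun i => by rw [hu i]; exact hch3 _ _
  clear_value u
  clear hudef hu hF
  -- the loss vectors
  set m : ℕ → EuclideanSpace ℝ (Fin d) := fun t => G • u ((t-1)/L) with hm
  -- block partial sums have large norm
  have hBnorm : ∀ k : ℕ, (k:ℝ) ≤ ‖∑ j ∈ Finset.range k, u j‖^2 := by
    intro k
    induction k with
    | zero => simp
    | succ n ih =>
      rw [Finset.sum_range_succ, norm_add_sq_real]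
      have h1 := hub n
      have h2 := real_inner_comm (u n) (∑ j ∈ Finset.range n, u j)
      have h3 := hunorm n
      push_cast
      nlinarith
  have hIccIoc : ∀ M : ℕ, Finset.Icc 1 M = Finset.Ioc 0 M := by
    intro M; ext x; simp [Finset.mem_Icc, Finset.mem_Ioc]; omega
  -- grouping of the m-sum into blocks
  have hgroup : ∀ k : ℕ, ∑ t ∈ Finset.Ioc 0 (k*L), u ((t-1)/L)
      = (L:ℝ) • ∑ j ∈ Finset.range k, u j := by
    intro k
    induction k with
    | zero => simp
    | succ n ih =>
      have hsplit : ∑ t ∈ Finset.Ioc 0 (n*L), u ((t-1)/L)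
          + ∑ t ∈ Finset.Ioc (n*L) ((n+1)*L), u ((t-1)/L)
          = ∑ t ∈ Finset.Ioc 0 ((n+1)*L), u ((t-1)/L) :=
        Finset.sum_Ioc_consecutive _ (Nat.zero_le _)
          (Nat.mul_le_mul_right L (Nat.le_succ n))
      have hconst : ∑ t ∈ Finset.Ioc (n*L) ((n+1)*L), u ((t-1)/L)
          = (L:ℝ) • u n := by
        have : ∀ t ∈ Finset.Ioc (n*L) ((n+1)*L), u ((t-1)/L) = u n := by
          intro t ht
          rw [Finset.mem_Ioc] at ht
          have hlo : n*L ≤ t-1 := by omega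
          have hhi : t-1 < (n+1)*L := by omega
          rw [Nat.div_eq_of_lt_le hlo hhi]
        rw [Finset.sum_congr rfl this, Finset.sum_const, Nat.card_Ioc]
        rw [Nat.succ_mul, Nat.add_sub_cancel_left]
        rw [← Nat.cast_smul_eq_nsmul ℝ]
      rw [← hsplit, ih, hconst, Finset.sum_range_succ, smul_add]
  set Nf : ℕ := T / L with hNfdef
  have hmodfacts : L * Nf + T % L = T ∧ T % L < L := ⟨Nat.div_add_mod T L, Nat.mod_lt T hL0⟩
  -- total vector norm
  have hVsplit : ∑ t ∈ Finset.Ioc 0 T, u ((t-1)/L)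
      = (L:ℝ) • (∑ j ∈ Finset.range Nf, u j) + ((T % L : ℕ):ℝ) • u Nf := by
    have h1 : Nf * L ≤ T := Nat.div_mul_le_self T L
    have hsplit : ∑ t ∈ Finset.Ioc 0 (Nf*L), u ((t-1)/L)
        + ∑ t ∈ Finset.Ioc (Nf*L) T, u ((t-1)/L)
        = ∑ t ∈ Finset.Ioc 0 T, u ((t-1)/L) :=
      Finset.sum_Ioc_consecutive _ (Nat.zero_le _) h1
    have hconst : ∑ t ∈ Finset.Ioc (Nf*L) T, u ((t-1)/L) = ((T % L : ℕ):ℝ) • u Nf := by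
      have hc : ∀ t ∈ Finset.Ioc (Nf*L) T, u ((t-1)/L) = u Nf := by
        intro t ht
        rw [Finset.mem_Ioc] at ht
        have hlo : Nf*L ≤ t-1 := by omega
        have hhi : t-1 < (Nf+1)*L := by
          have h2 := hmodfacts.1
          have h3 := hmodfacts.2
          have h4 : T < (Nf+1)*L := by
            rw [Nat.succ_mul, Nat.mul_comm Nf L]; omega
          omega
        rw [Nat.div_eq_of_lt_le hlo hhi]
      rw [Finset.sum_congr rfl hc, Finset.sum_const, Nat.card_Ioc]
      rw [← Nat.cast_smul_eq_nsmul ℝ]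
      congr 2
      have h2 := hmodfacts.1
      rw [Nat.mul_comm Nf L]
      omega
    rw [← hsplit, hgroup Nf, hconst]
  have hVnorm : Real.sqrt Nf * L ≤ ‖∑ t ∈ Finset.Ioc 0 T, u ((t-1)/L)‖ := by
    have hsq : (Nf:ℝ) * L^2 ≤ ‖∑ t ∈ Finset.Ioc 0 T, u ((t-1)/L)‖^2 := by
      rw [hVsplit, norm_add_sq_real]
      have h1 : ‖(L:ℝ) • (∑ j ∈ Finset.range Nf, u j)‖^2
          = (L:ℝ)^2 * ‖∑ j ∈ Finset.range Nf, u j‖^2 := by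
        rw [norm_smul]
        simp [abs_of_pos hL0', mul_pow]
      have h2 : 0 ≤ ⟪(L:ℝ) • (∑ j ∈ Finset.range Nf, u j), ((T % L : ℕ):ℝ) • u Nf⟫_ℝ := by
        rw [real_inner_smul_left, real_inner_smul_right, real_inner_comm]
        have := hub Nf
        positivity
      have h3 := hBnorm Nf
      nlinarith [sq_nonneg ‖((T % L : ℕ):ℝ) • u Nf‖, sq_nonneg ((L:ℝ))]
    have h5 : Real.sqrt ((Nf:ℝ) * L^2) ≤ Real.sqrt (‖∑ t ∈ Finset.Ioc 0 T, u ((t-1)/L)‖^2) :=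
      Real.sqrt_le_sqrt hsq
    rw [Real.sqrt_mul (Nat.cast_nonneg Nf), Real.sqrt_sq (le_of_lt hL0'),
      Real.sqrt_sq (norm_nonneg _)] at h5
    exact h5
  have hMnorm : G * (Real.sqrt Nf * L) ≤ ‖∑ t ∈ Finset.Icc 1 T, m t‖ := by
    have : ∑ t ∈ Finset.Icc 1 T, m t = G • ∑ t ∈ Finset.Ioc 0 T, u ((t-1)/L) := by
      rw [hIccIoc, Finset.smul_sum]
    rw [this, norm_smul, Real.norm_eq_abs, abs_of_pos hG]
    exact mul_le_mul_of_nonneg_left hVnorm (le_of_lt hG)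
  -- the infimum over the ball
  have hinf : ∀ M : EuclideanSpace ℝ (Fin d),
      (⨅ v : Metric.closedBall (0 : EuclideanSpace ℝ (Fin d)) (D / 2),
        ⟪M, (v : EuclideanSpace ℝ (Fin d))⟫_ℝ) ≤ -(D/2 * ‖M‖) := by
    intro M
    have hbdd : BddBelow (Set.range fun v : Metric.closedBall (0 : EuclideanSpace ℝ (Fin d)) (D/2) =>
        ⟪M, (v : EuclideanSpace ℝ (Fin d))⟫_ℝ) := by
      refine ⟨-(‖M‖ * (D/2)), ?_⟩
      rintro x ⟨v, rfl⟩
      have h1 : |⟪M, (v : EuclideanSpace ℝ (Fin d))⟫_ℝ| ≤ ‖M‖ * ‖(v : EuclideanSpace ℝ (Fin d))‖ :=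
        abs_real_inner_le_norm _ _
      have h2 : ‖(v : EuclideanSpace ℝ (Fin d))‖ ≤ D/2 := by
        have := v.2
        rwa [Metric.mem_closedBall, dist_zero_right] at this
      have h3 : -(‖M‖ * ‖(v : EuclideanSpace ℝ (Fin d))‖) ≤ ⟪M, (v : EuclideanSpace ℝ (Fin d))⟫_ℝ :=
        neg_le_of_abs_le h1
      have h4 : ‖M‖ * ‖(v : EuclideanSpace ℝ (Fin d))‖ ≤ ‖M‖ * (D/2) :=
        mul_le_mul_of_nonneg_left h2 (norm_nonneg M)
      simp only [Set.mem_setOf_eq]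
      linarith
    by_cases hM0 : M = 0
    · have h0mem : (0 : EuclideanSpace ℝ (Fin d)) ∈ Metric.closedBall (0 : EuclideanSpace ℝ (Fin d)) (D/2) := by
        rw [Metric.mem_closedBall, dist_self]; positivity
      have := ciInf_le hbdd (⟨0, h0mem⟩ : Metric.closedBall (0 : EuclideanSpace ℝ (Fin d)) (D/2))
      simp only [hM0] at this ⊢
      simpa using this
    · set vstar : EuclideanSpace ℝ (Fin d) := (-(D/2)/‖M‖) • M with hvstar
      have hMnorm0 : (0:ℝ) < ‖M‖ := norm_pos_iff.mpr hM0
      have hmem : vstar ∈ Metric.closedBall (0 : EuclideanSpace ℝ (Fin d)) (D/2) := by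
        rw [Metric.mem_closedBall, dist_zero_right, hvstar, norm_smul, Real.norm_eq_abs]
        rw [abs_div, abs_neg, abs_of_pos (by linarith : (0:ℝ) < D/2), abs_of_pos hMnorm0]
        rw [div_mul_cancel₀ _ (ne_of_gt hMnorm0)]
      have hval : ⟪M, vstar⟫_ℝ = -(D/2 * ‖M‖) := by
        rw [hvstar, real_inner_smul_right, real_inner_self_eq_norm_mul_norm]
        field_simp
      have := ciInf_le hbdd (⟨vstar, hmem⟩ : Metric.closedBall (0 : EuclideanSpace ℝ (Fin d)) (D/2))
      rw [hval] at this
      exact this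
  refine ⟨m, ?_, ?_⟩
  · intro t ht
    simp only [hm]
    rw [norm_smul, Real.norm_eq_abs, abs_of_pos hG, hunorm, mul_one]
  · intro w
    by_cases hsw : ∑ t ∈ Finset.Icc 2 T, ‖w t - w (t - 1)‖ ≤ S
    swap
    · exact Or.inl hsw
    right
    -- the block starts coincide with the choice inputs
    have hws : ∀ i : ℕ, w (i*L+1) = σ (i*L) (fun j : Fin (i*L) => G • u (j.val/L)) :=
      fun i => rfl
    clear_value w
    -- path inequality
    have hpath : ∀ s t : ℕ, s ≤ t →
        ‖w t - w s‖ ≤ ∑ τ ∈ Finset.Icc (s+1) t, ‖w τ - w (τ-1)‖ := by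
      intro s t hst
      induction t, hst using Nat.le_induction with
      | base => simp
      | succ t hst ih =>
        rw [Finset.sum_Icc_succ_top (by omega : s+1 ≤ t+1)]
        have htri : ‖w (t+1) - w s‖ ≤ ‖w (t+1) - w t‖ + ‖w t - w s‖ :=
          norm_sub_le_norm_sub_add_norm_sub _ _ _
        have : w (t+1-1) = w t := by norm_num
        rw [this]
        linarith
    -- per-round loss lower bound
    have hlossterm : ∀ t ∈ Finset.Icc 1 T,
        -(G * ∑ τ ∈ Finset.Icc ((t-1)/L*L+2) t, ‖w τ - w (τ-1)‖) ≤ ⟪m t, w t⟫_ℝ := by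
      intro t ht
      rw [Finset.mem_Icc] at ht
      have hs_le : (t-1)/L*L+1 ≤ t := by
        have h := Nat.div_mul_le_self (t-1) L
        omega
      have h1 : ⟪m t, w t⟫_ℝ = G * ⟪u ((t-1)/L), w t⟫_ℝ := by
        simp only [hm]
        rw [real_inner_smul_left]
      have h2 : ⟪u ((t-1)/L), w t⟫_ℝ = ⟪u ((t-1)/L), w ((t-1)/L*L+1)⟫_ℝ
          + ⟪u ((t-1)/L), w t - w ((t-1)/L*L+1)⟫_ℝ := by
        rw [← inner_add_right]
        congr 1
        exact (add_sub_cancel _ _).symm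
      have h3 : 0 ≤ ⟪u ((t-1)/L), w ((t-1)/L*L+1)⟫_ℝ := by
        rw [hws ((t-1)/L)]
        exact hua ((t-1)/L)
      have h4 : -‖w t - w ((t-1)/L*L+1)‖ ≤ ⟪u ((t-1)/L), w t - w ((t-1)/L*L+1)⟫_ℝ := by
        have h5 := abs_real_inner_le_norm (u ((t-1)/L)) (w t - w ((t-1)/L*L+1))
        rw [hunorm, one_mul] at h5
        linarith [neg_le_of_abs_le h5]
      have h6 := hpath ((t-1)/L*L+1) t hs_le
      have h7 : -(∑ τ ∈ Finset.Icc ((t-1)/L*L+2) t, ‖w τ - w (τ-1)‖) ≤ ⟪u ((t-1)/L), w t⟫_ℝ := by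
        have : (t-1)/L*L+1+1 = (t-1)/L*L+2 := by omega
        rw [this] at h6
        linarith
      rw [h1]
      have h8 := mul_le_mul_of_nonneg_left h7 hG.le
      linarith
    -- double counting of movement
    have hdouble : ∑ t ∈ Finset.Icc 1 T, ∑ τ ∈ Finset.Icc ((t-1)/L*L+2) t, ‖w τ - w (τ-1)‖
        ≤ ((L:ℝ)-1) * S := by
      have hstep1 : ∀ t ∈ Finset.Icc 1 T,
          ∑ τ ∈ Finset.Icc ((t-1)/L*L+2) t, ‖w τ - w (τ-1)‖
          = ∑ τ ∈ Finset.Icc 2 T, if τ ∈ Finset.Icc ((t-1)/L*L+2) t then ‖w τ - w (τ-1)‖ else 0 := by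
        intro t ht
        rw [Finset.mem_Icc] at ht
        rw [Finset.sum_ite_mem]
        congr 1
        refine (Finset.inter_eq_right.mpr ?_).symm
        intro τ hτ
        rw [Finset.mem_Icc] at hτ ⊢
        omega
      rw [Finset.sum_congr rfl hstep1, Finset.sum_comm]
      have hstep2 : ∀ τ ∈ Finset.Icc 2 T,
          ∑ t ∈ Finset.Icc 1 T, (if τ ∈ Finset.Icc ((t-1)/L*L+2) t then ‖w τ - w (τ-1)‖ else 0)
          ≤ ((L:ℝ)-1) * ‖w τ - w (τ-1)‖ := by
        intro τ hτ
        rw [← Finset.sum_filter, Finset.sum_const, nsmul_eq_mul]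
        have hcard : ((Finset.Icc 1 T).filter (fun t => τ ∈ Finset.Icc ((t-1)/L*L+2) t)).card ≤ L - 1 := by
          have hsubset : ((Finset.Icc 1 T).filter (fun t => τ ∈ Finset.Icc ((t-1)/L*L+2) t))
              ⊆ Finset.Ico τ (τ + (L-1)) := by
            intro t htf
            rw [Finset.mem_filter, Finset.mem_Icc, Finset.mem_Icc] at htf
            rw [Finset.mem_Ico]
            obtain ⟨⟨ht1, ht2⟩, hc1, hc2⟩ := htf
            have hP := Nat.div_add_mod (t-1) L
            have hmod : (t-1) % L < L := Nat.mod_lt _ hL0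
            rw [Nat.mul_comm ((t-1)/L) L] at hc1
            omega
          calc ((Finset.Icc 1 T).filter _).card ≤ (Finset.Ico τ (τ + (L-1))).card :=
                Finset.card_le_card hsubset
            _ = L - 1 := by rw [Nat.card_Ico]; omega
        have hcast : (((Finset.Icc 1 T).filter (fun t => τ ∈ Finset.Icc ((t-1)/L*L+2) t)).card : ℝ)
            ≤ (L:ℝ) - 1 := by
          have h1 : (((Finset.Icc 1 T).filter (fun t => τ ∈ Finset.Icc ((t-1)/L*L+2) t)).card : ℝ)
              ≤ ((L - 1 : ℕ) : ℝ) := by exact_mod_cast hcard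
          have h2 : ((L - 1 : ℕ) : ℝ) = (L:ℝ) - 1 := by
            rw [Nat.cast_sub hL0, Nat.cast_one]
          linarith
        exact mul_le_mul_of_nonneg_right hcast (norm_nonneg _)
      calc ∑ τ ∈ Finset.Icc 2 T, ∑ t ∈ Finset.Icc 1 T,
            (if τ ∈ Finset.Icc ((t-1)/L*L+2) t then ‖w τ - w (τ-1)‖ else 0)
          ≤ ∑ τ ∈ Finset.Icc 2 T, ((L:ℝ)-1) * ‖w τ - w (τ-1)‖ := Finset.sum_le_sum hstep2
        _ = ((L:ℝ)-1) * ∑ τ ∈ Finset.Icc 2 T, ‖w τ - w (τ-1)‖ := by rw [Finset.mul_sum]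
        _ ≤ ((L:ℝ)-1) * S := by
            apply mul_le_mul_of_nonneg_left hsw
            have : (1:ℝ) ≤ (L:ℝ) := by exact_mod_cast hL0
            linarith
    -- total loss lower bound
    have hloss : -(G * (((L:ℝ)-1) * S)) ≤ ∑ t ∈ Finset.Icc 1 T, ⟪m t, w t⟫_ℝ := by
      have h1 := Finset.sum_le_sum hlossterm
      have h2 : ∑ t ∈ Finset.Icc 1 T, -(G * ∑ τ ∈ Finset.Icc ((t-1)/L*L+2) t, ‖w τ - w (τ-1)‖)
          = -(G * ∑ t ∈ Finset.Icc 1 T, ∑ τ ∈ Finset.Icc ((t-1)/L*L+2) t, ‖w τ - w (τ-1)‖) := by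
        rw [Finset.mul_sum, ← Finset.sum_neg_distrib]
      rw [h2] at h1
      have h3 : G * ∑ t ∈ Finset.Icc 1 T, ∑ τ ∈ Finset.Icc ((t-1)/L*L+2) t, ‖w τ - w (τ-1)‖
          ≤ G * (((L:ℝ)-1) * S) := mul_le_mul_of_nonneg_left hdouble hG.le
      linarith
    -- real form of the floor bound
    have hL1r : (1:ℝ) ≤ (L:ℝ) := by exact_mod_cast hL0
    have hNfr : (T:ℝ) - L + 1 ≤ (L:ℝ) * Nf := by
      have h1 := hmodfacts.1
      have h2 := hmodfacts.2
      have h3 : ((L * Nf + T % L : ℕ):ℝ) = (T:ℝ) := by exact_mod_cast congrArg (Nat.cast (R := ℝ)) h1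
      push_cast at h3
      have h4 : ((T % L : ℕ):ℝ) ≤ (L:ℝ) - 1 := by
        have h5 : T % L ≤ L - 1 := by omega
        have h6 := (Nat.cast_le (α := ℝ)).mpr h5
        rw [Nat.cast_sub hL0, Nat.cast_one] at h6
        exact h6
      linarith
    -- the key numeric inequality
    have hkey : D * (D*(T:ℝ)/S) / 20 ≤ D/2 * (Real.sqrt Nf * L) - ((L:ℝ)-1) * S :=
      key_ineq D S T L Nf hD hS hSlow hT hL0 hLdef hNfdef
    -- put everything together
    have hinfM := hinf (∑ t ∈ Finset.Icc 1 T, m t)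
    have h9 : D/2 * (G * (Real.sqrt Nf * L)) ≤ D/2 * ‖∑ t ∈ Finset.Icc 1 T, m t‖ :=
      mul_le_mul_of_nonneg_left hMnorm (by positivity)
    have h10 : G * (D * (D*(T:ℝ)/S) / 20) ≤ G * (D/2 * (Real.sqrt Nf * L) - ((L:ℝ)-1) * S) :=
      mul_le_mul_of_nonneg_left hkey hG.le
    have h11 : (0.05:ℝ) * D * G * (D * (T:ℝ) / S) = G * (D * (D*(T:ℝ)/S) / 20) := by
      rw [show (0.05:ℝ) = 1/20 by norm_num]; ring
    rw [ge_iff_le, h11]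
    linarith only [hloss, hinfM, h9, h10]
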